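/- Stability of QPD-ASR: suppose the j-th request has a level-sample function L satisfying L(n) ≤ b·q^n for all n, with b > 0 and 0 < q < 1. Let c* = log_q( (αη·q^{−n_0}) / (b + αη·q^{−n_0}) ). Then c* > 0 and the feasibility inequality L(n_{j-1} + c*) ≤ W(j-1)·(1 − q^{c*}) holds, so c* is an upper bound on the cost assigned to this request. -/

import Mathlib

/-- Stability of QPD-ASR: if the level-sample function satisfies `L(n) ≤ b·q^n`,
then `c* = log_q(αη·q^{−n₀}/(b + αη·q^{−n₀}))` is positive and the feasibility
inequality `L(n_{j-1} + c*) ≤ W(j-1)·(1 − q^{c*})` holds whenever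
`W(j-1) ≥ αη·q^{n_{j-1} − n₀}`; hence `c*` bounds the assigned cost. -/
theorem qpd_asr_stability
    (α η b q : ℝ) (n0 : ℕ)
    (hα : 0 < α) (hη : 0 < η) (hb : 0 < b) (hq0 : 0 < q) (hq1 : q < 1) :
    0 < Real.logb q (α * η * q ^ (-(n0 : ℝ)) / (b + α * η * q ^ (-(n0 : ℝ)))) ∧
      ∀ (L : ℝ → ℝ) (n W : ℝ),
        (∀ x : ℝ, L x ≤ b * q ^ x) →
        α * η * q ^ (n - n0) ≤ W →
        L (n + Real.logb q (α * η * q ^ (-(n0 : ℝ)) / (b + α * η * q ^ (-(n0 : ℝ))))) ≤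
          W * (1 - q ^ Real.logb q
            (α * η * q ^ (-(n0 : ℝ)) / (b + α * η * q ^ (-(n0 : ℝ))))) := by
  set A : ℝ := α * η * q ^ (-(n0 : ℝ)) with hA
  have hApos : 0 < A := by positivity
  have hden : 0 < b + A := by linarith
  have hr0 : 0 < A / (b + A) := div_pos hApos hden
  have hr1 : A / (b + A) < 1 := (div_lt_one hden).2 (by linarith)
  set c : ℝ := Real.logb q (A / (b + A)) with hc
  have hqc : q ^ c = A / (b + A) := by
    rw [hc, Real.rpow_logb hq0 (by linarith) hr0]
  have hcpos : 0 < c := Real.logb_pos_of_base_lt_one hq0 hq1 hr0 hr1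
  refine ⟨hcpos, fun L n W hL hW => ?_⟩
  calc L (n + c) ≤ b * q ^ (n + c) := hL _
    _ = (α * η * q ^ (n - n0)) * (b / (b + A)) := by
        rw [Real.rpow_add hq0, hqc]
        have : q ^ (n - (n0:ℝ)) = q ^ n * q ^ (-(n0:ℝ)) := by
          rw [← Real.rpow_add hq0]; ring_nf
        rw [this, hA]
        field_simp
    _ ≤ W * (b / (b + A)) := by
        apply mul_le_mul_of_nonneg_right hW (by positivity)
    _ = W * (1 - q ^ c) := by
        rw [hqc]; field_simp; ring
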